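/- Let G be a group whose abelianization is ℤ/6ℤ, and suppose the group Hom(K, 𝔽_3) is nontrivial, where K is the kernel of the canonical epimorphism G → ℤ/6ℤ, and suppose the conjugation action of a generator of ℤ/6ℤ squared has a nonzero fixed vector in Hom(K, 𝔽_3). Then G surjects onto the symmetric group S_3. -/

import Mathlib

namespace Stmt9

variable {G : Type*} [Group G]

/-- exponent of `x`: the `val` of its image in `ZMod 6`. -/
def nn (π : G →* Multiplicative (ZMod 6)) (x : G) : ℕ := (Multiplicative.toAdd (π x)).val

/-- total version of a hom on the kernel. -/
def FF (π : G →* Multiplicative (ZMod 6)) (φ : π.ker →* Multiplicative (ZMod 3)) (k : G) :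
    ZMod 3 := if h : k ∈ π.ker then Multiplicative.toAdd (φ ⟨k, h⟩) else 0

/-- the crossed homomorphism `x ↦ FF (x * g^{-nn x})`. -/
def AA (π : G →* Multiplicative (ZMod 6)) (φ : π.ker →* Multiplicative (ZMod 3)) (g x : G) :
    ZMod 3 := FF π φ (x * (g ^ nn π x)⁻¹)

variable (π : G →* Multiplicative (ZMod 6)) (φ : π.ker →* Multiplicative (ZMod 3)) {g : G}

lemma pi_gpow (hg : π g = Multiplicative.ofAdd (1 : ZMod 6)) (m : ℕ) :
    π (g ^ m) = Multiplicative.ofAdd ((m : ZMod 6)) := by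
  rw [map_pow, hg, ← ofAdd_nsmul]
  norm_num

lemma mem_ker_aux (hg : π g = Multiplicative.ofAdd (1 : ZMod 6)) (x : G) :
    x * (g ^ nn π x)⁻¹ ∈ π.ker := by
  have : ((nn π x : ZMod 6)) = Multiplicative.toAdd (π x) := by
    simp [nn, ZMod.natCast_val, ZMod.cast_id]
  rw [MonoidHom.mem_ker, map_mul, map_inv, pi_gpow π hg, this]
  simp

lemma FF_of_mem {k : G} (h : k ∈ π.ker) : FF π φ k = Multiplicative.toAdd (φ ⟨k, h⟩) :=
  dif_pos h

lemma FF_one : FF π φ 1 = 0 := by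
  rw [FF_of_mem π φ (one_mem _)]
  have : (⟨1, one_mem _⟩ : π.ker) = 1 := rfl
  rw [this, map_one, toAdd_one]

lemma FF_mul {a b : G} (ha : a ∈ π.ker) (hb : b ∈ π.ker) :
    FF π φ (a * b) = FF π φ a + FF π φ b := by
  rw [FF_of_mem π φ (mul_mem ha hb), FF_of_mem π φ ha, FF_of_mem π φ hb]
  have : (⟨a * b, mul_mem ha hb⟩ : π.ker) = ⟨a, ha⟩ * ⟨b, hb⟩ := rfl
  rw [this, map_mul, toAdd_mul]

lemma FF_pow {a : G} (ha : a ∈ π.ker) (m : ℕ) :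
    FF π φ (a ^ m) = (m : ZMod 3) * FF π φ a := by
  induction m with
  | zero => simpa using FF_one π φ
  | succ k ih =>
      rw [pow_succ, FF_mul π φ (pow_mem ha k) ha, ih]
      push_cast
      ring

lemma FF_conj_pow (σ : ZMod 3)
    (hconj : ∀ a ∈ π.ker, FF π φ (g * a * g⁻¹) = σ * FF π φ a)
    (m : ℕ) {a : G} (ha : a ∈ π.ker) :
    FF π φ (g ^ m * a * (g ^ m)⁻¹) = σ ^ m * FF π φ a := by
  induction m with
  | zero => simp
  | succ k ih =>
      have h1 : g ^ (k+1) * a * (g ^ (k+1))⁻¹ = g * (g ^ k * a * (g ^ k)⁻¹) * g⁻¹ := by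
        rw [pow_succ']; group
      rw [h1, hconj _ ((MonoidHom.normal_ker π).conj_mem a ha (g ^ k)), ih, pow_succ]
      ring

lemma nn_mul (x y : G) : nn π (x * y) = (nn π x + nn π y) % 6 := by
  simp [nn, map_mul, toAdd_mul, ZMod.val_add]

lemma key_split (x y : G) :
    (x * y) * (g ^ nn π (x * y))⁻¹
      = (x * (g ^ nn π x)⁻¹) * (g ^ nn π x * (y * (g ^ nn π y)⁻¹) * (g ^ nn π x)⁻¹)
        * (g ^ 6) ^ ((nn π x + nn π y) / 6) := by
  have hsplit : nn π x + nn π y = nn π (x * y) + 6 * ((nn π x + nn π y) / 6) := by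
    rw [nn_mul]; omega
  have h3 : g ^ nn π x * g ^ nn π y = (g ^ 6) ^ ((nn π x + nn π y) / 6) * g ^ nn π (x*y) := by
    rw [← pow_mul, ← pow_add, ← pow_add]
    congr 1
    omega
  have h4 : g ^ nn π x * (g ^ nn π y * (g ^ nn π (x*y))⁻¹)
      = (g ^ 6) ^ ((nn π x + nn π y) / 6) := by
    rw [← mul_assoc, h3]; simp
  rw [← h4]; group

lemma g6_mem (hg : π g = Multiplicative.ofAdd (1 : ZMod 6)) : (g : G) ^ 6 ∈ π.ker := by
  rw [MonoidHom.mem_ker, pi_gpow π hg]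
  decide

lemma AA_mul (hg : π g = Multiplicative.ofAdd (1 : ZMod 6)) (σ : ZMod 3)
    (hconj : ∀ a ∈ π.ker, FF π φ (g * a * g⁻¹) = σ * FF π φ a) (x y : G) :
    AA π φ g (x * y) = AA π φ g x + σ ^ nn π x * AA π φ g y
      + (((nn π x + nn π y) / 6 : ℕ) : ZMod 3) * FF π φ (g ^ 6) := by
  have hx := mem_ker_aux π hg x
  have hy := mem_ker_aux π hg y
  have hcm : g ^ nn π x * (y * (g ^ nn π y)⁻¹) * (g ^ nn π x)⁻¹ ∈ π.ker :=
    (MonoidHom.normal_ker π).conj_mem _ hy (g ^ nn π x)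
  have hgm : ((g : G) ^ 6) ^ ((nn π x + nn π y) / 6) ∈ π.ker := pow_mem (g6_mem π hg) _
  unfold AA
  rw [key_split, FF_mul π φ (mul_mem hx hcm) hgm, FF_mul π φ hx hcm,
    FF_conj_pow π φ σ hconj _ hy, FF_pow π φ (g6_mem π hg)]

lemma nn_lt (x : G) : nn π x < 6 := ZMod.val_lt _

lemma nn_ker {k : G} (hk : k ∈ π.ker) : nn π k = 0 := by
  unfold nn
  rw [MonoidHom.mem_ker.mp hk]
  rfl

lemma AA_ker {k : G} (hk : k ∈ π.ker) : AA π φ g k = FF π φ k := by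
  unfold AA
  rw [nn_ker π hk, pow_zero, inv_one, mul_one]

lemma degenerate (hg : π g = Multiplicative.ofAdd (1 : ZMod 6))
    (hker : π.ker = commutator G) (f : π.ker →* Multiplicative (ZMod 3))
    (hconj : ∀ a ∈ π.ker, FF π f (g * a * g⁻¹) = FF π f a) : f = 1 := by
  set e : ZMod 3 := FF π f (g ^ 6) with he
  set A : G → ZMod 3 := AA π f g with hA
  have L0 : ∀ a b : ZMod 3, (3 : ZMod 9) * ((a + b).val : ZMod 9)
      = 3 * (a.val : ZMod 9) + 3 * (b.val : ZMod 9) := by decide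
  have L1 : ∀ a b c : ZMod 3, (3 : ZMod 9) * ((a + b + c).val : ZMod 9)
      = 3 * (a.val : ZMod 9) + 3 * (b.val : ZMod 9) + 12 * (c.val : ZMod 9) := by decide
  have Lz : ∀ c : ZMod 3, (3 : ZMod 9) * (c.val : ZMod 9) = 0 → c = 0 := by decide
  have hmul : ∀ x y : G,
      (3 : ZMod 9) * ((A (x*y)).val : ZMod 9) + 2 * (e.val : ZMod 9) * (nn π (x*y) : ZMod 9)
      = (3 * ((A x).val : ZMod 9) + 2 * (e.val : ZMod 9) * (nn π x : ZMod 9))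
        + (3 * ((A y).val : ZMod 9) + 2 * (e.val : ZMod 9) * (nn π y : ZMod 9)) := by
    intro x y
    have hA2 := AA_mul π f hg 1 (by simpa using hconj) x y
    simp only [one_pow, one_mul] at hA2
    have hm : (nn π x + nn π y) / 6 = 0 ∨ (nn π x + nn π y) / 6 = 1 := by
      have := nn_lt π x; have := nn_lt π y; omega
    have hns : nn π x + nn π y = nn π (x*y) + 6 * ((nn π x + nn π y) / 6) := by
      rw [nn_mul]; omega
    rcases hm with hm | hm
    · rw [hm] at hA2 hns
      simp only [Nat.cast_zero, zero_mul, add_zero, mul_zero] at hA2 hns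
      have hxy : ((nn π (x*y) : ℕ) : ZMod 9) = (nn π x : ZMod 9) + (nn π y : ZMod 9) := by
        exact_mod_cast congrArg (Nat.cast : ℕ → ZMod 9) hns.symm
      rw [hA, hA2, L0, hxy]
      ring
    · rw [hm] at hA2 hns
      simp only [Nat.cast_one, one_mul, mul_one] at hA2 hns
      have hxy : ((nn π (x*y) : ℕ) : ZMod 9) + 6 = (nn π x : ZMod 9) + (nn π y : ZMod 9) := by
        exact_mod_cast congrArg (Nat.cast : ℕ → ZMod 9) hns.symm
      rw [hA, hA2, L1]
      linear_combination (2 * (e.val : ZMod 9)) * hxy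
  let Φ : G →* Multiplicative (ZMod 9) := MonoidHom.mk'
    (fun x => Multiplicative.ofAdd
      ((3 : ZMod 9) * ((A x).val : ZMod 9) + 2 * (e.val : ZMod 9) * (nn π x : ZMod 9)))
    (fun x y => by rw [← ofAdd_add, hmul x y])
  have hcomm : π.ker ≤ Φ.ker := by
    rw [hker]
    exact Abelianization.commutator_subset_ker Φ
  ext k
  obtain ⟨k, hk⟩ := k
  have h1 : Φ k = 1 := hcomm hk
  have h2 : (3 : ZMod 9) * ((A k).val : ZMod 9) + 2 * (e.val : ZMod 9) * (nn π k : ZMod 9) = 0 := by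
    have := congrArg Multiplicative.toAdd h1
    exact this
  rw [nn_ker π hk] at h2
  simp only [Nat.cast_zero, mul_zero, add_zero] at h2
  have h3 : A k = 0 := Lz _ h2
  rw [hA, AA_ker π f hk, FF_of_mem π f hk] at h3
  have : f ⟨k, hk⟩ = Multiplicative.ofAdd (0 : ZMod 3) := by
    rw [← h3]; rfl
  simpa using this

end Stmt9

open Stmt9 in
/-- Let `G` be a group whose abelianization is `ℤ/6` (encoded: the canonical epimorphism
`π : G → ℤ/6` is surjective with kernel the commutator subgroup); let `K = Ker π`.  If
`Hom(K, 𝔽₃)` is nontrivial and contains a nonzero element fixed by the square of the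
conjugation action of a lift `g` of a generator of `ℤ/6`, then `G` surjects onto `S₃`. -/
theorem stmt_9 (G : Type*) [Group G] (π : G →* Multiplicative (ZMod 6))
    (hπ : Function.Surjective π) (hker : π.ker = commutator G)
    (g : G) (hg : π g = Multiplicative.ofAdd (1 : ZMod 6))
    (f : π.ker →* Multiplicative (ZMod 3)) (hf : f ≠ 1)
    (hfix : ∀ x : G, ∀ hx : x ∈ π.ker,
      f ⟨(g * g) * x * (g * g)⁻¹, (MonoidHom.normal_ker π).conj_mem x hx (g * g)⟩ =
        f ⟨x, hx⟩) :
    ∃ h : G →* Equiv.Perm (Fin 3), Function.Surjective h := by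
  classical
  have hnormal := MonoidHom.normal_ker π
  -- conjugation by `g` as an endomorphism of the kernel
  let cg : π.ker →* π.ker :=
    { toFun := fun k => ⟨g * k * g⁻¹, hnormal.conj_mem k k.2 g⟩
      map_one' := by ext; simp
      map_mul' := fun a b => by
        ext; show g * ((a : G) * b) * g⁻¹ = (g * a * g⁻¹) * (g * b * g⁻¹); group }
  -- the twisted hom f₁ = f / (f ∘ cg)
  let f₁ : π.ker →* Multiplicative (ZMod 3) := f / f.comp cg
  have hf₁app : ∀ k : π.ker, f₁ k = f k / f (cg k) := fun k => rfl
  have hfix' : ∀ k : π.ker, f (cg (cg k)) = f k := by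
    intro k
    have h1 : cg (cg k) = ⟨(g * g) * k * (g * g)⁻¹,
        hnormal.conj_mem k k.2 (g * g)⟩ := Subtype.ext (by simp [cg]; group)
    rw [h1, hfix k k.2]
  have hconj1 : ∀ a ∈ π.ker, FF π f₁ (g * a * g⁻¹) = (-1 : ZMod 3) * FF π f₁ a := by
    intro a ha
    rw [FF_of_mem π f₁ (hnormal.conj_mem a ha g), FF_of_mem π f₁ ha]
    have h1 : (⟨g * a * g⁻¹, hnormal.conj_mem a ha g⟩ : π.ker) = cg ⟨a, ha⟩ := rfl
    rw [h1, hf₁app, hf₁app, toAdd_div, toAdd_div, hfix' ⟨a, ha⟩]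
    ring
  by_cases hdeg : f₁ = 1
  · -- degenerate case: f is conjugation-invariant, contradiction
    exfalso
    apply hf
    apply degenerate π hg hker f
    intro a ha
    have h1 : f (cg ⟨a, ha⟩) = f ⟨a, ha⟩ := by
      have := congrArg (fun F : π.ker →* Multiplicative (ZMod 3) => F ⟨a, ha⟩) hdeg
      simp only [MonoidHom.one_apply] at this
      rw [hf₁app] at this
      exact (div_eq_one.mp this).symm
    rw [FF_of_mem π f (hnormal.conj_mem a ha g), FF_of_mem π f ha]
    have h2 : (⟨g * a * g⁻¹, hnormal.conj_mem a ha g⟩ : π.ker) = cg ⟨a, ha⟩ := rfl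
    rw [h2, h1]
  · -- main case : f₁ is a (-1)-eigenvector
    have hg6 : FF π f₁ (g ^ 6) = 0 := by
      have h66 : g * g ^ 6 * g⁻¹ = g ^ 6 := by group
      have h1 := hconj1 (g ^ 6) (g6_mem π hg)
      rw [h66] at h1
      exact (by decide : ∀ a : ZMod 3, a = -1 * a → a = 0) _ h1
    have hAmul : ∀ x y : G, AA π f₁ g (x * y)
        = AA π f₁ g x + (-1 : ZMod 3) ^ nn π x * AA π f₁ g y := by
      intro x y
      have h1 := AA_mul π f₁ hg (-1) hconj1 x y
      rw [hg6, mul_zero, add_zero] at h1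
      exact h1
    have hparity : ∀ k : ℕ, (-1 : ZMod 3) ^ k = (-1) ^ (k % 2) := by
      intro k
      conv_lhs => rw [← Nat.div_add_mod k 2]
      rw [pow_add, pow_mul]
      norm_num
    have hεmul : ∀ x y : G,
        (-1 : ZMod 3) ^ nn π (x * y) = (-1) ^ nn π x * (-1) ^ nn π y := by
      intro x y
      rw [nn_mul, hparity ((nn π x + nn π y) % 6), Nat.mod_mod_of_dvd _ (by norm_num),
        ← hparity, pow_add]
    have hε2 : ∀ x : G, (-1 : ZMod 3) ^ nn π x * (-1) ^ nn π x = 1 := by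
      intro x
      rw [← mul_pow]
      norm_num
    let P : G → Equiv.Perm (ZMod 3) := fun x =>
      { toFun := fun v => (-1 : ZMod 3) ^ nn π x * v + AA π f₁ g x
        invFun := fun v => (-1 : ZMod 3) ^ nn π x * (v - AA π f₁ g x)
        left_inv := fun v => by
          dsimp only
          rw [add_sub_cancel_right, ← mul_assoc, hε2, one_mul]
        right_inv := fun v => by
          dsimp only
          rw [← mul_assoc, hε2, one_mul, sub_add_cancel] }
    have hPapp : ∀ (x : G) (v : ZMod 3),
        P x v = (-1 : ZMod 3) ^ nn π x * v + AA π f₁ g x := fun x v => rfl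
    let h : G →* Equiv.Perm (ZMod 3) := MonoidHom.mk' P (by
      intro x y
      ext v
      rw [Equiv.Perm.mul_apply, hPapp, hPapp, hPapp, hεmul, hAmul]
      ring)
    have hhapp : ∀ (x : G) (v : ZMod 3),
        h x v = (-1 : ZMod 3) ^ nn π x * v + AA π f₁ g x := fun x v => rfl
    -- the generator data
    have hex : ∃ k : π.ker, f₁ k ≠ 1 := by
      by_contra hc
      push_neg at hc
      exact hdeg (DFunLike.ext _ _ fun k => by rw [hc k]; rfl)
    obtain ⟨k₀, hk₀⟩ := hex
    set a : ZMod 3 := Multiplicative.toAdd (f₁ k₀) with haDef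
    have ha : a ≠ 0 := by
      intro h0
      apply hk₀
      have : f₁ k₀ = Multiplicative.ofAdd (0 : ZMod 3) := by rw [← h0]; rfl
      simpa using this
    have haa : a * a = 1 := (by decide : ∀ b : ZMod 3, b ≠ 0 → b * b = 1) a ha
    have hFk : FF π f₁ (k₀ : G) = a := by
      rw [FF_of_mem π f₁ k₀.2, haDef]
    have hknn : ∀ j : ℕ, nn π ((k₀ : G) ^ j) = 0 := fun j => nn_ker π (pow_mem k₀.2 j)
    have hkA : ∀ j : ℕ, AA π f₁ g ((k₀ : G) ^ j) = (j : ZMod 3) * a := by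
      intro j
      rw [AA_ker π f₁ (pow_mem k₀.2 j), FF_pow π f₁ k₀.2, hFk]
    have hkapp : ∀ (j : ℕ) (v : ZMod 3), h ((k₀ : G) ^ j) v = v + (j : ZMod 3) * a := by
      intro j v
      rw [hhapp, hknn, hkA, pow_zero, one_mul]
    have hnng : nn π g = 1 := by
      unfold Stmt9.nn
      rw [hg]
      rfl
    have hAg : AA π f₁ g g = 0 := by
      unfold Stmt9.AA
      rw [hnng, pow_one, mul_inv_cancel g, FF_one]
    have hgapp : ∀ v : ZMod 3, h g v = -v := by
      intro v
      rw [hhapp, hnng, hAg, pow_one, add_zero]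
      ring
    have hsurj : ∀ ρ : Equiv.Perm (ZMod 3), ∃ x : G, h x = ρ := by
      intro ρ
      set c : ZMod 3 := ρ 0 with hc
      have hinj := ρ.injective
      have h10 : ρ 1 ≠ ρ 0 := fun hq => absurd (hinj hq) (by decide)
      have h20 : ρ 2 ≠ ρ 0 := fun hq => absurd (hinj hq) (by decide)
      have h21 : ρ 2 ≠ ρ 1 := fun hq => absurd (hinj hq) (by decide)
      rcases (by decide : ∀ c' d : ZMod 3, d ≠ c' → d = c' + 1 ∨ d = c' + 2) _ _ h10 with h2 | h2
      · -- translation: ρ v = v + c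
        have h3 : ρ 2 = c + 2 := by
          have n1 : ρ 2 ≠ c + 1 := by rw [← h2]; exact h21
          exact (by decide : ∀ c' e : ZMod 3, e ≠ c' → e ≠ c' + 1 → e = c' + 2) _ _ h20 n1
        refine ⟨(k₀ : G) ^ (c * a).val, ?_⟩
        ext v
        rw [hkapp]
        have hcv : (((c * a).val : ℕ) : ZMod 3) = c * a := by
          simp [ZMod.natCast_val, ZMod.cast_id]
        rw [hcv, mul_assoc, haa, mul_one]
        rcases (by decide : ∀ w : ZMod 3, w = 0 ∨ w = 1 ∨ w = 2) v with hv | hv | hv <;>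
          subst hv
        · rw [← hc, zero_add]
        · rw [h2]; ring
        · rw [h3]; ring
      · -- reflection: ρ v = -v + c
        have h3 : ρ 2 = c + 1 := by
          have n2 : ρ 2 ≠ c + 2 := by rw [← h2]; exact h21
          exact (by decide : ∀ c' e : ZMod 3, e ≠ c' → e ≠ c' + 2 → e = c' + 1) _ _ h20 n2
        refine ⟨g * (k₀ : G) ^ ((-c) * a).val, ?_⟩
        ext v
        rw [map_mul, Equiv.Perm.mul_apply, hkapp, hgapp]
        have hcv : ((((-c) * a).val : ℕ) : ZMod 3) = (-c) * a := by
          simp [ZMod.natCast_val, ZMod.cast_id]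
        rw [hcv, mul_assoc, haa, mul_one]
        rcases (by decide : ∀ w : ZMod 3, w = 0 ∨ w = 1 ∨ w = 2) v with hv | hv | hv <;>
          subst hv
        · rw [← hc]; ring
        · rw [h2]; have h30 : (3 : ZMod 3) = 0 := by decide
          linear_combination -h30
        · rw [h3]; have h30 : (3 : ZMod 3) = 0 := by decide
          linear_combination -h30

    exact ⟨h, hsurj⟩
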